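/- Let X = ⋃_{n≥0} X_n where X_0 = ℝ/ℤ × {0} and X_n = ℝ/ℤ × {1/n} for n ≥ 1, with f acting on each circle by x ↦ x + α for a fixed irrational α. Then (X,f) does not have δ-restricted two-sided orbital limit shadowing: for every δ > 0 there is a two-sided asymptotic δ-pseudo-orbit ⟨x_i⟩_{i∈ℤ} admitting no full trajectory ⟨z_i⟩ with α(⟨z_i⟩) = α(⟨x_i⟩) and ω(⟨z_i⟩) = ω(⟨x_i⟩). -/

import Mathlib

open Filter Metric Topology Set

def omegaSeq {X : Type*} [MetricSpace X] (u : ℕ → X) : Set X :=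
  ⋂ M : ℕ, closure (u '' Set.Ioi M)

def omegaPt {X : Type*} [MetricSpace X] (f : X → X) (x : X) : Set X :=
  omegaSeq (fun n => f^[n] x)

def omegaZ {X : Type*} [MetricSpace X] (u : ℤ → X) : Set X :=
  ⋂ M : ℕ, closure (u '' {n : ℤ | (M : ℤ) < n})

def alphaZ {X : Type*} [MetricSpace X] (u : ℤ → X) : Set X :=
  ⋂ M : ℕ, closure (u '' {n : ℤ | n < -(M : ℤ)})

/-- `A` is internally chain transitive for `f`. -/
def chainTransitive {X : Type*} [MetricSpace X] (f : X → X) (A : Set X) : Prop :=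
  ∀ a ∈ A, ∀ b ∈ A, ∀ δ > (0:ℝ), ∃ N : ℕ, 1 ≤ N ∧ ∃ y : ℕ → X,
    y 0 = a ∧ y N = b ∧ (∀ i ≤ N, y i ∈ A) ∧ ∀ i < N, dist (f (y i)) (y (i+1)) < δ

/-- `u` is a full trajectory of `f`. -/
def fullTraj {X : Type*} (f : X → X) (u : ℤ → X) : Prop := ∀ i : ℤ, f (u i) = u (i + 1)

/-- `u` is a two-sided asymptotic pseudo-orbit of `f`. -/
def twoSidedAsymptotic {X : Type*} [MetricSpace X] (f : X → X) (u : ℤ → X) : Prop :=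
  Filter.Tendsto (fun i : ℤ => dist (f (u i)) (u (i + 1))) Filter.atTop (nhds 0) ∧
  Filter.Tendsto (fun i : ℤ => dist (f (u i)) (u (i + 1))) Filter.atBot (nhds 0)

/-- The γ-limit set of a point. -/
def gammaLimit {X : Type*} [MetricSpace X] (f : X → X) (x : X) : Set X :=
  {y | y ∈ omegaPt f x ∧ ∃ (ys : ℕ → X) (ns : ℕ → ℕ), StrictMono ns ∧
    (∀ i, f^[ns i] (ys i) = x) ∧ Filter.Tendsto ys Filter.atTop (nhds y)}

/-- The union of circles at heights `0` and `1/n`, realised as a product with a subtype. -/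
abbrev circSpace : Type :=
  AddCircle (1:ℝ) × {y : ℝ // y = 0 ∨ ∃ n : ℕ, 0 < n ∧ y = 1 / (n : ℝ)}

/-- Rotation by `α` on each circle. -/
noncomputable def circMap (α : ℝ) : circSpace → circSpace :=
  fun p => (p.1 + (α : AddCircle (1:ℝ)), p.2)

lemma circSet_compact : IsCompact {y : ℝ | y = 0 ∨ ∃ n : ℕ, 0 < n ∧ y = 1 / (n : ℝ)} := by
  have h : {y : ℝ | y = 0 ∨ ∃ n : ℕ, 0 < n ∧ y = 1 / (n : ℝ)}
      = insert (0:ℝ) (Set.range fun n : ℕ => 1 / ((n : ℝ) + 1)) := by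
    ext y
    constructor
    · rintro (rfl | ⟨n, hn, rfl⟩)
      · exact Or.inl rfl
      · right
        refine ⟨n - 1, ?_⟩
        have : ((n - 1 : ℕ) : ℝ) + 1 = (n : ℝ) := by
          have h2 : (n - 1) + 1 = n := Nat.succ_pred_eq_of_pos hn
          exact_mod_cast congrArg (Nat.cast : ℕ → ℝ) h2
        show 1 / (((n-1:ℕ) : ℝ) + 1) = 1 / (n : ℝ)
        rw [this]
    · rintro (rfl | ⟨n, rfl⟩)
      · exact Or.inl rfl
      · right
        exact ⟨n + 1, Nat.succ_pos n, by push_cast; ring_nf⟩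
  rw [h]
  exact tendsto_one_div_add_atTop_nhds_zero_nat.isCompact_insert_range

instance : CompactSpace {y : ℝ // y = 0 ∨ ∃ n : ℕ, 0 < n ∧ y = 1 / (n : ℝ)} :=
  isCompact_iff_compactSpace.mp circSet_compact

lemma omegaZ_nonempty (u : ℤ → circSpace) : (omegaZ u).Nonempty := by
  apply IsCompact.nonempty_iInter_of_directed_nonempty_isCompact_isClosed
  · intro a b
    refine ⟨max a b, ?_, ?_⟩ <;> apply closure_mono <;> apply Set.image_mono <;>
      intro n hn <;> simp only [Set.mem_setOf_eq] at hn ⊢ <;> omega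
  · intro M
    exact ⟨u (M + 1), subset_closure ⟨M + 1, by simp, rfl⟩⟩
  · intro M; exact isClosed_closure.isCompact
  · intro M; exact isClosed_closure

lemma alphaZ_nonempty (u : ℤ → circSpace) : (alphaZ u).Nonempty := by
  apply IsCompact.nonempty_iInter_of_directed_nonempty_isCompact_isClosed
  · intro a b
    refine ⟨max a b, ?_, ?_⟩ <;> apply closure_mono <;> apply Set.image_mono <;>
      intro n hn <;> simp only [Set.mem_setOf_eq] at hn ⊢ <;> omega
  · intro M
    exact ⟨u (-(M : ℤ) - 1), subset_closure ⟨-(M : ℤ) - 1, by simp, rfl⟩⟩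
  · intro M; exact isClosed_closure.isCompact
  · intro M; exact isClosed_closure

lemma snd_const_of_fullTraj {α : ℝ} {z : ℤ → circSpace} (hz : fullTraj (circMap α) z) :
    ∀ i : ℤ, (z i).2 = (z 0).2 := by
  have key : ∀ i : ℤ, (z (i + 1)).2 = (z i).2 := by
    intro i
    rw [← hz i]; rfl
  intro i
  induction i using Int.induction_on with
  | zero => rfl
  | succ i ih => rw [key i]; exact ih
  | pred i ih => have := key (-(i:ℤ) - 1); simp only [sub_add_cancel] at this; rw [← this]; exact ih

theorem stmt18 (α : ℝ) (hα : Irrational α) :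
    ∀ δ > (0:ℝ), ∃ x : ℤ → circSpace,
      (∀ i, dist (circMap α (x i)) (x (i + 1)) < δ) ∧
      twoSidedAsymptotic (circMap α) x ∧
      ¬ ∃ z : ℤ → circSpace, fullTraj (circMap α) z ∧
        alphaZ z = alphaZ x ∧ omegaZ z = omegaZ x := by
  intro δ hδ
  obtain ⟨n, hn⟩ := exists_nat_one_div_lt hδ
  set h : ℝ := 1 / ((n : ℝ) + 1) with hh
  have hhpos : 0 < h := by positivity
  have hmem : h = 0 ∨ ∃ m : ℕ, 0 < m ∧ h = 1 / (m : ℝ) :=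
    Or.inr ⟨n + 1, Nat.succ_pos n, by push_cast [hh]; ring_nf⟩
  set y0 : {y : ℝ // y = 0 ∨ ∃ m : ℕ, 0 < m ∧ y = 1 / (m : ℝ)} := ⟨0, Or.inl rfl⟩ with hy0
  set y1 : {y : ℝ // y = 0 ∨ ∃ m : ℕ, 0 < m ∧ y = 1 / (m : ℝ)} := ⟨h, hmem⟩ with hy1
  set x : ℤ → circSpace := fun i =>
    (i • ((α : AddCircle (1:ℝ))), if 0 ≤ i then y0 else y1) with hx
  have hfst : ∀ i : ℤ, (circMap α (x i)).1 = (x (i + 1)).1 := by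
    intro i
    simp only [hx, circMap]
    rw [add_zsmul, one_zsmul]
  have hexact : ∀ i : ℤ, i ≠ -1 → circMap α (x i) = x (i + 1) := by
    intro i hi
    refine Prod.ext (hfst i) ?_
    simp only [hx, circMap]
    by_cases h0 : 0 ≤ i
    · have : (0:ℤ) ≤ i + 1 := by omega
      simp [h0, this]
    · have : ¬ (0:ℤ) ≤ i + 1 := by omega
      simp [h0, this]
  have hdist : ∀ i : ℤ, dist (circMap α (x i)) (x (i + 1)) < δ := by
    intro i
    by_cases hi : i = -1
    · subst hi
      have hd : dist (circMap α (x (-1))) (x 0) = h := by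
        rw [Prod.dist_eq]
        have h1 : (circMap α (x (-1))).1 = (x 0).1 := by
          have := hfst (-1); simpa using this
        rw [h1, dist_self]
        have h2 : (circMap α (x (-1))).2 = y1 := by
          simp [circMap, hx]
        have h3 : (x 0).2 = y0 := by simp [hx]
        rw [h2, h3]
        simp only [Subtype.dist_eq, hy0, hy1]
        rw [Real.dist_eq]
        simp only [sub_zero]
        rw [abs_of_pos hhpos]
        exact max_eq_right hhpos.le
      simp only [neg_add_cancel] at hd ⊢
      rw [hd]
      exact hn
    · rw [hexact i hi, dist_self]; exact hδ
  refine ⟨x, hdist, ⟨?_, ?_⟩, ?_⟩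
  · apply Tendsto.congr' _ tendsto_const_nhds
    filter_upwards [eventually_ge_atTop (0:ℤ)] with i hi
    rw [hexact i (by omega), dist_self]
  · apply Tendsto.congr' _ tendsto_const_nhds
    filter_upwards [eventually_le_atBot (-2:ℤ)] with i hi
    rw [hexact i (by omega), dist_self]
  · rintro ⟨z, hz, hA, hO⟩
    have hzc := snd_const_of_fullTraj hz
    -- every point of alphaZ z and omegaZ z has second coordinate (z 0).2
    have hclosed : IsClosed {p : circSpace | p.2 = (z 0).2} := by
      have : {p : circSpace | p.2 = (z 0).2} = Prod.snd ⁻¹' {(z 0).2} := rfl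
      rw [this]
      exact (isClosed_singleton).preimage continuous_snd
    have hsub : ∀ (s : Set ℤ), closure (z '' s) ⊆ {p : circSpace | p.2 = (z 0).2} := by
      intro s
      apply closure_minimal _ hclosed
      rintro p ⟨i, _, rfl⟩
      exact hzc i
    -- pick points
    obtain ⟨a, ha⟩ := alphaZ_nonempty x
    obtain ⟨b, hb⟩ := omegaZ_nonempty x
    have haz : a ∈ alphaZ z := hA ▸ ha
    have hbz : b ∈ omegaZ z := hO ▸ hb
    have ha2 : a.2 = (z 0).2 := hsub _ (Set.mem_iInter.mp haz 0)
    have hb2 : b.2 = (z 0).2 := hsub _ (Set.mem_iInter.mp hbz 0)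
    -- from x: a has height h, b has height 0
    have hax : a.2 = y1 := by
      have := Set.mem_iInter.mp ha 0
      have hsub2 : closure (x '' {m : ℤ | m < -(0:ℤ)}) ⊆ {p : circSpace | p.2 = y1} := by
        apply closure_minimal _ ?_
        · rintro p ⟨i, hi, rfl⟩
          simp only [Set.mem_setOf_eq] at hi ⊢
          show (if (0:ℤ) ≤ i then y0 else y1) = y1
          rw [if_neg (by omega)]
        · have : {p : circSpace | p.2 = y1} = Prod.snd ⁻¹' {y1} := rfl
          rw [this]; exact isClosed_singleton.preimage continuous_snd
      exact hsub2 this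
    have hbx : b.2 = y0 := by
      have := Set.mem_iInter.mp hb 0
      have hsub2 : closure (x '' {m : ℤ | (0:ℤ) < m}) ⊆ {p : circSpace | p.2 = y0} := by
        apply closure_minimal _ ?_
        · rintro p ⟨i, hi, rfl⟩
          simp only [Set.mem_setOf_eq] at hi ⊢
          show (if (0:ℤ) ≤ i then y0 else y1) = y0
          rw [if_pos (by omega)]
        · have : {p : circSpace | p.2 = y0} = Prod.snd ⁻¹' {y0} := rfl
          rw [this]; exact isClosed_singleton.preimage continuous_snd
      exact hsub2 this
    have : y1 = y0 := by rw [← hax, ha2, ← hb2, hbx]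
    have : h = 0 := congrArg Subtype.val this
    linarith
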